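/- Let C = {K_1,...,K_m} be a covering of a finite set U, let A = {K_i − ⋃_{j≠i} K_j : this set is nonempty}, and B = U − ⋃A. Then {cl_{M(C)}({x}) : x ∈ U} = A ∪ {{x} : x ∈ B}, where M(C) is the transversal matroid induced by C. -/

import Mathlib

open Set

/-- The rank function of a matroid: the maximum cardinality of an independent subset. -/
noncomputable def mrk {α : Type*} (M : Matroid α) (X : Set α) : ℕ :=
  sSup {n : ℕ | ∃ I ⊆ X, M.Indep I ∧ I.ncard = n}

/-- `M` is the transversal matroid (on ground set `univ`) induced by the family `𝒞` of
subsets: independent sets are exactly the partial transversals of `𝒞`. -/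
def IsTransversalMatroidOf {α : Type*} (M : Matroid α) (𝒞 : Set (Set α)) : Prop :=
  M.E = Set.univ ∧
    ∀ I : Set α, M.Indep I ↔
      ∃ f : α → Set α, Set.InjOn f I ∧ ∀ x ∈ I, f x ∈ 𝒞 ∧ x ∈ f x

/-- A hyperplane of a matroid on ground set `univ`: a flat of rank `r(U) - 1`. -/
def IsHyperplaneOf {α : Type*} (M : Matroid α) (H : Set α) : Prop :=
  M.IsFlat H ∧ mrk M H = mrk M Set.univ - 1

theorem closure_singletons_eq_A_union_B {α : Type*} [Fintype α]
    (𝒞 : Set (Set α)) (hne : ∅ ∉ 𝒞) (hcov : ⋃₀ 𝒞 = Set.univ)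
    (M : Matroid α) (hM : IsTransversalMatroidOf M 𝒞)
    (A : Set (Set α)) (hA : A = {S : Set α | S ≠ ∅ ∧ ∃ K ∈ 𝒞, S = K \ ⋃₀ (𝒞 \ {K})})
    (B : Set α) (hB : B = Set.univ \ ⋃₀ A) :
    {S : Set α | ∃ x : α, S = M.closure {x}} = A ∪ {S : Set α | ∃ x ∈ B, S = {x}} := by
  classical
  obtain ⟨hE, hind⟩ := hM
  -- every point lies in a block
  have hblk : ∀ x : α, ∃ K ∈ 𝒞, x ∈ K := by
    intro x
    have : x ∈ ⋃₀ 𝒞 := by rw [hcov]; trivial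
    simpa [mem_sUnion] using this
  -- every singleton is independent
  have hsing : ∀ x : α, M.Indep {x} := by
    intro x
    obtain ⟨K, hK, hxK⟩ := hblk x
    refine (hind {x}).2 ⟨fun _ => K, fun a ha b hb _ => by rw [mem_singleton_iff] at ha hb; rw [ha, hb], ?_⟩
    rintro y rfl; exact ⟨hK, hxK⟩
  -- translating `∉ ⋃₀ (𝒞 \ {K})`
  have hnotmem : ∀ (y : α) (K : Set α), (∀ L ∈ 𝒞, y ∈ L → L = K) → y ∉ ⋃₀ (𝒞 \ {K}) := by
    rintro y K h ⟨L, hL, hyL⟩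
    exact hL.2 (h L hL.1 hyL)
  have hmem' : ∀ (y : α) (K : Set α), y ∉ ⋃₀ (𝒞 \ {K}) → ∀ L ∈ 𝒞, y ∈ L → L = K := by
    intro y K h L hL hyL
    by_contra hLK
    exact h ⟨L, ⟨hL, hLK⟩, hyL⟩
  -- pairs in distinct blocks are independent
  have hpair : ∀ (x y : α) (K L : Set α), K ∈ 𝒞 → L ∈ 𝒞 → x ∈ K → y ∈ L → K ≠ L →
      x ≠ y → M.Indep {x, y} := by
    intro x y K L hK hL hxK hyL hKL hxy
    refine (hind {x, y}).2 ⟨fun z => if z = x then K else L, ?_, ?_⟩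
    · rintro a (rfl | ha) b (rfl | hb) hab
      · rfl
      · exfalso
        rw [mem_singleton_iff] at hb; subst hb
        dsimp only at hab
        rw [if_pos rfl, if_neg (Ne.symm hxy)] at hab
        exact hKL hab
      · exfalso
        rw [mem_singleton_iff] at ha; subst ha
        dsimp only at hab
        rw [if_pos rfl, if_neg (Ne.symm hxy)] at hab
        exact hKL hab.symm
      · rw [mem_singleton_iff] at ha hb; rw [ha, hb]
    · rintro z (rfl | hz)
      · dsimp only
        rw [if_pos rfl]; exact ⟨hK, hxK⟩
      · rw [mem_singleton_iff] at hz; subst hz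
        dsimp only
        rw [if_neg (Ne.symm hxy)]; exact ⟨hL, hyL⟩
  -- pairs both lying only in the same block K are dependent
  have hpairdep : ∀ (x y : α) (K : Set α), K ∈ 𝒞 → x ≠ y →
      (∀ L ∈ 𝒞, x ∈ L → L = K) → (∀ L ∈ 𝒞, y ∈ L → L = K) →
      ¬ M.Indep {x, y} := by
    intro x y K hK hxy hx hy hI
    obtain ⟨f, hinj, hf⟩ := (hind {x, y}).1 hI
    have h1 : f x = K := hx _ (hf x (by simp)).1 (hf x (by simp)).2
    have h2 : f y = K := hy _ (hf y (by simp)).1 (hf y (by simp)).2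
    exact hxy (hinj (by simp) (by simp) (h1.trans h2.symm))
  -- closure of a point lying only in K
  have hclonly : ∀ (x : α) (K : Set α), K ∈ 𝒞 → x ∈ K →
      (∀ L ∈ 𝒞, x ∈ L → L = K) → M.closure {x} = K \ ⋃₀ (𝒞 \ {K}) := by
    intro x K hK hxK honly
    ext y
    rw [(hsing x).mem_closure_iff', hE]
    constructor
    · rintro ⟨-, h⟩
      rcases eq_or_ne y x with rfl | hyx
      · exact ⟨hxK, hnotmem y K honly⟩
      · have hyonly : ∀ L ∈ 𝒞, y ∈ L → L = K := by
          intro L hL hyL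
          by_contra hLK
          have hi := hpair y x L K hL hK hyL hxK hLK hyx
          exact hyx (by simpa using h hi)
        obtain ⟨L, hL, hyL⟩ := hblk y
        exact ⟨(hyonly L hL hyL) ▸ hyL, hnotmem y K hyonly⟩
    · rintro ⟨hyK, hy⟩
      refine ⟨mem_univ y, fun hI => ?_⟩
      by_contra hyx
      have hyx' : y ≠ x := by simpa using hyx
      exact hpairdep y x K hK hyx' (hmem' y K hy) honly hI
  -- closure of a point lying in at least two blocks
  have hclmulti : ∀ x : α, (¬ ∃ K ∈ 𝒞, x ∈ K ∧ ∀ L ∈ 𝒞, x ∈ L → L = K) →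
      M.closure {x} = {x} := by
    intro x h
    apply subset_antisymm
    · intro y hy
      rw [(hsing x).mem_closure_iff'] at hy
      rcases eq_or_ne y x with rfl | hyx
      · exact mem_singleton _
      · obtain ⟨L, hL, hyL⟩ := hblk y
        obtain ⟨K', hK', hxK', hKL⟩ : ∃ K' ∈ 𝒞, x ∈ K' ∧ K' ≠ L := by
          by_cases hxL : x ∈ L
          · push_neg at h
            obtain ⟨K', hK', hxK', hne'⟩ := h L hL hxL
            exact ⟨K', hK', hxK', hne'⟩
          · obtain ⟨K, hK, hxK⟩ := hblk x
            exact ⟨K, hK, hxK, fun hEq => hxL (hEq ▸ hxK)⟩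
        exact hy.2 (hpair y x L K' hL hK' hyL hxK' (Ne.symm hKL) hyx)
    · exact M.subset_closure {x} (by rw [hE]; exact subset_univ _)
  -- main equality
  ext S
  simp only [mem_setOf_eq, mem_union]
  constructor
  · rintro ⟨x, rfl⟩
    by_cases h : ∃ K ∈ 𝒞, x ∈ K ∧ ∀ L ∈ 𝒞, x ∈ L → L = K
    · obtain ⟨K, hK, hxK, honly⟩ := h
      left
      rw [hA, hclonly x K hK hxK honly]
      refine ⟨?_, K, hK, rfl⟩
      have hxmem : x ∈ K \ ⋃₀ (𝒞 \ {K}) := ⟨hxK, hnotmem x K honly⟩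
      exact fun hEq => (hEq ▸ hxmem : x ∈ (∅ : Set α))
    · right
      refine ⟨x, ?_, hclmulti x h⟩
      rw [hB]
      refine ⟨trivial, ?_⟩
      rintro ⟨T, hTA, hxT⟩
      rw [hA] at hTA
      obtain ⟨-, K, hK, rfl⟩ := hTA
      exact h ⟨K, hK, hxT.1, hmem' x K hxT.2⟩
  · rintro (hSA | ⟨x, hxB, rfl⟩)
    · rw [hA] at hSA
      obtain ⟨hSne, K, hK, rfl⟩ := hSA
      obtain ⟨x, hxK, hx⟩ := nonempty_iff_ne_empty.2 hSne
      exact ⟨x, (hclonly x K hK hxK (hmem' x K hx)).symm⟩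
    · refine ⟨x, (hclmulti x ?_).symm⟩
      rintro ⟨K, hK, hxK, honly⟩
      rw [hB] at hxB
      have hxmem : x ∈ K \ ⋃₀ (𝒞 \ {K}) := ⟨hxK, hnotmem x K honly⟩
      refine hxB.2 ⟨K \ ⋃₀ (𝒞 \ {K}), ?_, hxmem⟩
      rw [hA]
      exact ⟨fun hEq => (hEq ▸ hxmem : x ∈ (∅ : Set α)), K, hK, rfl⟩
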